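/- arXiv:1012.5723 — 5 statements merged into one kernel-verified Lean document; each statement's English description precedes it below -/
import Mathlib

section
/- Let C > 0, b ∈ ℝ, and define r_ρ = sqrt((log ρ + b)/(C ρ)) for ρ large enough that log ρ + b > 0. If g : ℝ≥0 → [0,1] satisfies lim_{x→∞} g(x) x² (log x)² = 0, then for any fixed ε with 0 < ε < 1, lim_{ρ→∞} (log ρ + b) ∫_{r_ρ^{-ε}}^∞ 2πx g(x) dx = 0. -/
open MeasureTheory Filter Real

lemma aux_int_stmt3 (a : ℝ) (ha : 1 < a) :
    IntegrableOn (fun x => 1 / (x * Real.log x ^ 2)) (Set.Ioi a) ∧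
    ∫ x in Set.Ioi a, 1 / (x * Real.log x ^ 2) = 1 / Real.log a := by
  have ha0 : 0 < a := lt_trans one_pos ha
  have hla : 0 < Real.log a := Real.log_pos ha
  set f : ℝ → ℝ := fun x => -(Real.log x)⁻¹ with hf
  have hderiv : ∀ x ∈ Set.Ioi a, HasDerivAt f (1 / (x * Real.log x ^ 2)) x := by
    intro x hx
    have hx1 : 1 < x := lt_trans ha hx
    have hx0 : 0 < x := lt_trans one_pos hx1
    have hlx : Real.log x ≠ 0 := ne_of_gt (Real.log_pos hx1)
    have h1 : HasDerivAt Real.log x⁻¹ x := Real.hasDerivAt_log (ne_of_gt hx0)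
    have h2 := (h1.inv hlx).neg
    convert h2 using 1
    all_goals first | rfl | (rw [neg_div, neg_neg]; field_simp)
  have hcont : ContinuousWithinAt f (Set.Ici a) a :=
    (((Real.continuousAt_log (ne_of_gt ha0)).inv₀ (ne_of_gt hla)).neg).continuousWithinAt
  have hnonneg : ∀ x ∈ Set.Ioi a, 0 ≤ 1 / (x * Real.log x ^ 2) := by
    intro x hx
    have hx0 : 0 < x := lt_trans ha0 hx
    exact div_nonneg one_pos.le (mul_nonneg hx0.le (sq_nonneg _))
  have htend : Tendsto f atTop (nhds 0) := by
    have := Real.tendsto_log_atTop.inv_tendsto_atTop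
    simpa [f] using this.neg
  refine ⟨integrableOn_Ioi_deriv_of_nonneg hcont hderiv hnonneg htend, ?_⟩
  rw [integral_Ioi_of_hasDerivAt_of_nonneg hcont hderiv hnonneg htend]
  simp [f, one_div]

set_option maxHeartbeats 1000000 in
/-- Let `C > 0`, `b ∈ ℝ`, and `r_ρ = sqrt((log ρ + b)/(C ρ))`. If
`g : ℝ≥0 → [0,1]` satisfies `lim_{x→∞} g(x) x² (log x)² = 0`, then for any fixed
`ε ∈ (0,1)`, `lim_{ρ→∞} (log ρ + b) ∫_{r_ρ^{-ε}}^∞ 2πx g(x) dx = 0`. -/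
theorem stmt_3 (g : ℝ → ℝ) (C b ε : ℝ) (hC : 0 < C) (hε : 0 < ε) (hε1 : ε < 1)
    (hg01 : ∀ x, 0 ≤ x → 0 ≤ g x ∧ g x ≤ 1)
    (hsmall : Tendsto (fun x : ℝ => g x * x ^ 2 * (Real.log x) ^ 2) atTop (nhds 0)) :
    Tendsto
      (fun ρ : ℝ =>
        (Real.log ρ + b) *
          ∫ x in Set.Ioi ((Real.sqrt ((Real.log ρ + b) / (C * ρ))) ^ (-ε : ℝ)),
            2 * π * x * g x)
      atTop (nhds 0) := by
  rw [Metric.tendsto_nhds]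
  intro p hp
  set δ : ℝ := p * ε / (64 * π) with hδdef
  have hπ : (0:ℝ) < π := Real.pi_pos
  have hδ : 0 < δ := by positivity
  -- get the threshold x₀ for smallness of g x x² log²x
  have hev : ∀ᶠ x in atTop, |g x * x ^ 2 * Real.log x ^ 2| < δ := by
    have := Metric.tendsto_nhds.mp hsmall δ hδ
    simpa only [Real.dist_eq, sub_zero] using this
  obtain ⟨x₀, hx₀⟩ := eventually_atTop.mp hev
  set M : ℝ := max x₀ 3 with hMdef
  have hM3 : (3:ℝ) ≤ M := le_max_right _ _
  have hM0 : 0 < M := by linarith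
  -- eventual conditions on ρ
  have E1 : ∀ᶠ ρ : ℝ in atTop, 1 - b ≤ Real.log ρ :=
    Real.tendsto_log_atTop.eventually_ge_atTop _
  have E2 : ∀ᶠ ρ : ℝ in atTop, 1 ≤ Real.log ρ :=
    Real.tendsto_log_atTop.eventually_ge_atTop _
  have E3 : ∀ᶠ ρ : ℝ in atTop, (0:ℝ) < ρ := eventually_gt_atTop 0
  have E4 : ∀ᶠ ρ : ℝ in atTop, Real.log ρ + b ≤ Real.sqrt ρ := by
    have h1 : ∀ᶠ x : ℝ in atTop, |Real.log x| ≤ (1/2) * |x ^ ((1:ℝ)/2)| :=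
      (isLittleO_log_rpow_atTop (by norm_num : (0:ℝ) < 1/2)).def (by norm_num)
    have h2 : ∀ᶠ x : ℝ in atTop, 2 * b ≤ x ^ ((1:ℝ)/2) :=
      (tendsto_rpow_atTop (by norm_num : (0:ℝ) < 1/2)).eventually_ge_atTop _
    filter_upwards [h1, h2, eventually_ge_atTop (0:ℝ)] with x hx1 hx2 hx0
    have hs : Real.sqrt x = x ^ ((1:ℝ)/2) := Real.sqrt_eq_rpow x
    have hxr : 0 ≤ x ^ ((1:ℝ)/2) := Real.rpow_nonneg hx0 _
    rw [abs_of_nonneg hxr] at hx1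
    have := le_trans (le_abs_self _) hx1
    rw [hs]; linarith
  have E5 : ∀ᶠ ρ : ℝ in atTop, -4 * Real.log C ≤ Real.log ρ :=
    Real.tendsto_log_atTop.eventually_ge_atTop _
  have E6 : ∀ᶠ ρ : ℝ in atTop, b ≤ Real.log ρ :=
    Real.tendsto_log_atTop.eventually_ge_atTop _
  have E7 : ∀ᶠ ρ : ℝ in atTop, Real.log M ≤ ε / 8 * Real.log ρ := by
    have : Tendsto (fun ρ : ℝ => ε / 8 * Real.log ρ) atTop atTop :=
      Real.tendsto_log_atTop.const_mul_atTop (by positivity)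
    exact this.eventually_ge_atTop _
  filter_upwards [E1, E2, E3, E4, E5, E6, E7] with ρ e1 e2 e3 e4 e5 e6 e7
  set L : ℝ := Real.log ρ with hLdef
  set t : ℝ := L + b with htdef
  have ht1 : 1 ≤ t := by simp only [htdef]; linarith
  have ht0 : 0 < t := by linarith
  have hq : 0 < t / (C * ρ) := div_pos ht0 (mul_pos hC e3)
  set r : ℝ := Real.sqrt (t / (C * ρ)) with hrdef
  have hr : 0 < r := Real.sqrt_pos.mpr hq
  set R : ℝ := r ^ (-ε : ℝ) with hRdef
  have hR0 : 0 < R := Real.rpow_pos_of_pos hr _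
  have hlogR : Real.log R = ε / 2 * (Real.log C + L - Real.log t) := by
    rw [hRdef, Real.log_rpow hr, hrdef, Real.log_sqrt hq.le,
      Real.log_div ht0.ne' (mul_pos hC e3).ne', Real.log_mul hC.ne' e3.ne']
    ring
  have hlogt : Real.log t ≤ L / 2 := by
    have h := Real.log_le_log ht0 e4
    rwa [Real.log_sqrt e3.le] at h
  have hlogR_ge : ε / 8 * L ≤ Real.log R := by
    rw [hlogR]; nlinarith [hε.le, hlogt, e5]
  have hlogR0 : 0 < Real.log R := lt_of_lt_of_le (by positivity) hlogR_ge
  have hRM : M ≤ R := by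
    calc M = Real.exp (Real.log M) := (Real.exp_log hM0).symm
    _ ≤ Real.exp (Real.log R) := Real.exp_le_exp.mpr (le_trans e7 hlogR_ge)
    _ = R := Real.exp_log hR0
  have hR1 : 1 < R := lt_of_lt_of_le (by norm_num) (le_trans hM3 hRM)
  obtain ⟨hint, hval⟩ := aux_int_stmt3 R hR1
  -- pointwise bound
  have hptwise : ∀ x ∈ Set.Ioi R, 2 * π * x * g x ≤ 2 * π * δ * (1 / (x * Real.log x ^ 2)) := by
    intro x hx
    have hx3 : 3 ≤ x := le_trans (le_trans hM3 hRM) (le_of_lt hx)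
    have hx0 : 0 < x := by linarith
    have hlx0 : 0 < Real.log x := Real.log_pos (by linarith)
    have hgx : g x * x ^ 2 * Real.log x ^ 2 ≤ δ := by
      have hxx : x₀ ≤ x := le_trans (le_trans (le_max_left _ _) hRM) (le_of_lt hx)
      exact le_of_lt (lt_of_le_of_lt (le_abs_self _) (hx₀ x hxx))
    have hA : 0 < x * Real.log x ^ 2 := mul_pos hx0 (pow_pos hlx0 2)
    rw [mul_one_div, le_div_iff₀ hA]
    calc 2 * π * x * g x * (x * Real.log x ^ 2) = 2 * π * (g x * x ^ 2 * Real.log x ^ 2) := by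
          ring
    _ ≤ 2 * π * δ := by nlinarith [hπ]
  -- nonnegativity of the integral
  have hnn : 0 ≤ ∫ x in Set.Ioi R, 2 * π * x * g x := by
    apply setIntegral_nonneg measurableSet_Ioi
    intro x hx
    have hx0 : (0:ℝ) ≤ x := le_trans (by linarith : (0:ℝ) ≤ R) (le_of_lt hx)
    exact mul_nonneg (by positivity) (hg01 x hx0).1
  -- comparison
  have hIle : (∫ x in Set.Ioi R, 2 * π * x * g x) ≤
      ∫ x in Set.Ioi R, 2 * π * δ * (1 / (x * Real.log x ^ 2)) := by
    apply integral_mono_of_nonneg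
    · filter_upwards [self_mem_ae_restrict (measurableSet_Ioi : MeasurableSet (Set.Ioi R))]
        with x hx
      have hx0 : (0:ℝ) ≤ x := le_trans (by linarith : (0:ℝ) ≤ R) (le_of_lt hx)
      exact mul_nonneg (by positivity) (hg01 x hx0).1
    · exact hint.const_mul _
    · filter_upwards [self_mem_ae_restrict (measurableSet_Ioi : MeasurableSet (Set.Ioi R))]
        with x hx
      exact hptwise x hx
  have hIval : (∫ x in Set.Ioi R, 2 * π * δ * (1 / (x * Real.log x ^ 2)))
      = 2 * π * δ * (1 / Real.log R) := by
    rw [MeasureTheory.integral_const_mul, hval]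
  -- put it together
  have hIbound : (∫ x in Set.Ioi R, 2 * π * x * g x) ≤ 2 * π * δ * (1 / Real.log R) :=
    hIval ▸ hIle
  have hfinal : t * (∫ x in Set.Ioi R, 2 * π * x * g x) ≤ p / 2 := by
    have h1 : t * (∫ x in Set.Ioi R, 2 * π * x * g x) ≤ t * (2 * π * δ * (1 / Real.log R)) :=
      mul_le_mul_of_nonneg_left hIbound ht0.le
    have h2 : t * (2 * π * δ * (1 / Real.log R)) ≤ p / 2 := by
      have hB : 2 * π * δ = p * ε / 32 := by
        rw [hδdef]; field_simp; ring
      rw [show 2 * π * δ * (1 / Real.log R) = p * ε / 32 / Real.log R by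
        rw [hB, mul_one_div]]
      rw [← mul_div_assoc, div_le_iff₀ hlogR0]
      have ht2 : t ≤ 2 * L := by simp only [htdef]; linarith
      have e1 : t * (p * ε / 32) ≤ 2 * L * (p * ε / 32) :=
        mul_le_mul_of_nonneg_right ht2 (by positivity)
      have e2 : p / 2 * (ε / 8 * L) ≤ p / 2 * Real.log R :=
        mul_le_mul_of_nonneg_left hlogR_ge (by positivity)
      nlinarith [e1, e2]
    linarith
  rw [Real.dist_eq, sub_zero, abs_of_nonneg (mul_nonneg ht0.le hnn)]
  exact lt_of_le_of_lt hfinal (half_lt_self hp)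
end

section
/- Let g : ℝ≥0 → [0,1] be non-increasing and suppose lim_{x→∞} g(x) x² (log x)² = a for a constant 0 < a < ∞. Define r_ρ = sqrt((log ρ + b)/(C ρ)) with C = ∫_{ℝ²} g(‖x‖)dx. Then lim_{ρ→∞} (log ρ + b)/C · ∫_{(1/2) r_ρ^{-1}}^∞ 2πx g(x) dx = 4πa/C. -/
open MeasureTheory Filter Real

private lemma sqrt_tendsto_atTop' : Tendsto Real.sqrt atTop atTop := by
  rw [tendsto_atTop]
  intro M
  filter_upwards [eventually_ge_atTop (M ^ 2)] with x hx
  calc M ≤ |M| := le_abs_self M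
    _ = Real.sqrt (M ^ 2) := (Real.sqrt_sq_eq_abs M).symm
    _ ≤ Real.sqrt x := Real.sqrt_le_sqrt hx

private lemma log_div_self_tendsto : Tendsto (fun z : ℝ => Real.log z / z) atTop (nhds 0) := by
  simpa using Real.tendsto_pow_log_div_mul_add_atTop 1 0 1 one_ne_zero

private lemma log_add_div_tendsto (b : ℝ) :
    Tendsto (fun y : ℝ => Real.log (y + b) / y) atTop (nhds 0) := by
  have h2 : Tendsto (fun y : ℝ => Real.log (y + b) / (y + b)) atTop (nhds 0) :=
    log_div_self_tendsto.comp (tendsto_atTop_add_const_right atTop b tendsto_id)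
  have h3 : Tendsto (fun y : ℝ => (y + b) / y) atTop (nhds 1) := by
    have : Tendsto (fun y : ℝ => 1 + b / y) atTop (nhds 1) := by
      simpa using tendsto_const_nhds.add (tendsto_const_nhds.div_atTop (tendsto_id (α := ℝ)))
    refine this.congr' ?_
    filter_upwards [eventually_gt_atTop 0] with y hy
    field_simp
  have := h2.mul h3
  rw [zero_mul] at this
  refine this.congr' ?_
  filter_upwards [eventually_gt_atTop (max 0 (-b) + 1)] with y hy
  have hy0 : y ≠ 0 := by
    have : (0:ℝ) < y := lt_of_le_of_lt (by positivity) hy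
    exact ne_of_gt this
  have hyb : y + b ≠ 0 := by
    have : -b < y := lt_of_le_of_lt (le_trans (le_max_right 0 (-b)) (le_add_of_nonneg_right zero_le_one)) hy
    nlinarith
  field_simp

private lemma tail_int {T : ℝ} (hT : 1 < T) :
    IntegrableOn (fun x => x⁻¹ / Real.log x ^ 2) (Set.Ioi T) ∧
      ∫ x in Set.Ioi T, x⁻¹ / Real.log x ^ 2 = (Real.log T)⁻¹ := by
  have hderiv : ∀ x ∈ Set.Ici T, HasDerivAt (fun y => -(Real.log y)⁻¹) (x⁻¹ / Real.log x ^ 2) x := by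
    intro x hx
    have hx1 : 1 < x := lt_of_lt_of_le hT hx
    have hx0 : x ≠ 0 := by positivity
    have hlog : Real.log x ≠ 0 := ne_of_gt (Real.log_pos hx1)
    have h := ((Real.hasDerivAt_log hx0).inv hlog).neg
    convert h using 1
    all_goals first | rfl | ring
  have hpos : ∀ x ∈ Set.Ioi T, 0 ≤ x⁻¹ / Real.log x ^ 2 := by
    intro x hx
    have hx1 : 1 < x := lt_trans hT hx
    have : 0 < x := by linarith
    positivity
  have hlimF : Tendsto (fun y => -(Real.log y)⁻¹) atTop (nhds 0) := by
    have := (Real.tendsto_log_atTop.inv_tendsto_atTop).neg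
    simpa using this
  refine ⟨integrableOn_Ioi_deriv_of_nonneg' hderiv hpos hlimF, ?_⟩
  rw [integral_Ioi_of_hasDerivAt_of_nonneg' hderiv hpos hlimF]
  ring

private lemma Ibound (g : ℝ → ℝ) (a δ M T : ℝ)
    (hg0 : ∀ x, 0 ≤ x → 0 ≤ g x)
    (hmono : AntitoneOn g (Set.Ici 0)) (hδ : 0 ≤ a - δ)
    (hM : ∀ x, M ≤ x → |g x * x ^ 2 * Real.log x ^ 2 - a| ≤ δ)
    (hM1 : 1 < M) (hMT : M ≤ T) :
    IntegrableOn (fun x => 2 * π * x * g x) (Set.Ioi T) ∧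
      2 * π * (a - δ) * (Real.log T)⁻¹ ≤ (∫ x in Set.Ioi T, 2 * π * x * g x) ∧
      (∫ x in Set.Ioi T, 2 * π * x * g x) ≤ 2 * π * (a + δ) * (Real.log T)⁻¹ := by
  have hT : 1 < T := lt_of_lt_of_le hM1 hMT
  have hsub : Set.Ioi T ⊆ Set.Ici (0:ℝ) := fun x hx => le_of_lt (lt_trans (by linarith : (0:ℝ) < T) hx)
  have hgmeas : AEMeasurable g (volume.restrict (Set.Ioi T)) :=
    aemeasurable_restrict_of_antitoneOn measurableSet_Ioi (hmono.mono hsub)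
  have hmeas : AEStronglyMeasurable (fun x => 2 * π * x * g x) (volume.restrict (Set.Ioi T)) := by
    exact ((aemeasurable_id.const_mul (2 * π)).mul hgmeas).aestronglyMeasurable
  have htail := tail_int hT
  -- pointwise bounds
  have hpt : ∀ x ∈ Set.Ioi T,
      2 * π * (a - δ) * (x⁻¹ / Real.log x ^ 2) ≤ 2 * π * x * g x ∧
      2 * π * x * g x ≤ 2 * π * (a + δ) * (x⁻¹ / Real.log x ^ 2) := by
    intro x hx
    have hx1 : 1 < x := lt_trans hT hx
    have hx0 : (0:ℝ) < x := by linarith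
    have hL : 0 < Real.log x := Real.log_pos hx1
    have habs := hM x (le_of_lt (lt_of_le_of_lt hMT hx))
    rw [abs_le] at habs
    have he : 2 * π * x * g x
        = 2 * π * (g x * x ^ 2 * Real.log x ^ 2) * (x⁻¹ / Real.log x ^ 2) := by
      field_simp
    have hq : (0:ℝ) ≤ x⁻¹ / Real.log x ^ 2 := by positivity
    constructor
    · rw [he]
      have := habs.1
      have h2 : a - δ ≤ g x * x ^ 2 * Real.log x ^ 2 := by linarith
      gcongr
    · rw [he]
      have h2 : g x * x ^ 2 * Real.log x ^ 2 ≤ a + δ := by linarith [habs.2]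
      gcongr
  have hcompInt : IntegrableOn (fun x => 2 * π * (a + δ) * (x⁻¹ / Real.log x ^ 2))
      (Set.Ioi T) := htail.1.const_mul _
  have hint : IntegrableOn (fun x => 2 * π * x * g x) (Set.Ioi T) := by
    refine hcompInt.mono' hmeas ?_
    rw [ae_restrict_iff' measurableSet_Ioi]
    refine Filter.Eventually.of_forall fun x hx => ?_
    have hx1 : 1 < x := lt_trans hT hx
    have hx0 : (0:ℝ) < x := by linarith
    have hgx : 0 ≤ g x := hg0 x hx0.le
    rw [Real.norm_eq_abs, abs_of_nonneg (by positivity)]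
    exact (hpt x hx).2
  have hlowInt : IntegrableOn (fun x => 2 * π * (a - δ) * (x⁻¹ / Real.log x ^ 2))
      (Set.Ioi T) := htail.1.const_mul _
  have hconst : ∀ c : ℝ, ∫ x in Set.Ioi T, c * (x⁻¹ / Real.log x ^ 2) = c * (Real.log T)⁻¹ := by
    intro c
    rw [MeasureTheory.integral_const_mul, htail.2]
  refine ⟨hint, ?_, ?_⟩
  · have := setIntegral_mono_on hlowInt hint measurableSet_Ioi fun x hx => (hpt x hx).1
    rwa [hconst] at this
  · have := setIntegral_mono_on hint hcompInt measurableSet_Ioi fun x hx => (hpt x hx).2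
    rwa [hconst] at this

/-- Let `g : ℝ≥0 → [0,1]` be non-increasing with `lim_{x→∞} g(x) x² (log x)² = a`
for a constant `0 < a < ∞`. With `r_ρ = sqrt((log ρ + b)/(C ρ))` and
`C = ∫_{ℝ²} g(‖x‖) dx`, one has
`lim_{ρ→∞} (log ρ + b)/C · ∫_{(1/2) r_ρ^{-1}}^∞ 2πx g(x) dx = 4πa/C`. -/
theorem stmt_4 (g : ℝ → ℝ) (C b a : ℝ) (ha : 0 < a)
    (hg01 : ∀ x, 0 ≤ x → 0 ≤ g x ∧ g x ≤ 1)
    (hmono : AntitoneOn g (Set.Ici 0))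
    (hC : C = ∫ x : EuclideanSpace ℝ (Fin 2), g ‖x‖) (hCpos : 0 < C)
    (hlim : Tendsto (fun x : ℝ => g x * x ^ 2 * (Real.log x) ^ 2) atTop (nhds a)) :
    Tendsto
      (fun ρ : ℝ =>
        (Real.log ρ + b) / C *
          ∫ x in Set.Ioi ((1 / 2) * (Real.sqrt ((Real.log ρ + b) / (C * ρ)))⁻¹),
            2 * π * x * g x)
      atTop (nhds (4 * π * a / C)) := by
  set T : ℝ → ℝ := fun ρ => (1 / 2) * (Real.sqrt ((Real.log ρ + b) / (C * ρ)))⁻¹ with hTdef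
  -- T rewritten
  have hTeq : ∀ ρ : ℝ, T ρ = (1 / 2) * Real.sqrt ((C * ρ) / (Real.log ρ + b)) := by
    intro ρ
    rw [hTdef]
    simp only
    rw [← Real.sqrt_inv, inv_div]
  -- T tends to infinity
  have hfrac0 : Tendsto (fun ρ : ℝ => (Real.log ρ + b) / ρ) atTop (nhds 0) := by
    have h1 : Tendsto (fun ρ : ℝ => Real.log ρ / ρ) atTop (nhds 0) := log_div_self_tendsto
    have h2 : Tendsto (fun ρ : ℝ => b / ρ) atTop (nhds 0) :=
      tendsto_const_nhds.div_atTop tendsto_id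
    have := h1.add h2
    rw [add_zero] at this
    refine this.congr' ?_
    filter_upwards [eventually_gt_atTop 0] with ρ hρ
    rw [add_div]
  have hlogb : ∀ᶠ ρ : ℝ in atTop, 0 < Real.log ρ + b := by
    have := Real.tendsto_log_atTop.eventually_gt_atTop (-b)
    filter_upwards [this] with ρ h; linarith
  have hTtop : Tendsto T atTop atTop := by
    have hinner : Tendsto (fun ρ : ℝ => (C * ρ) / (Real.log ρ + b)) atTop atTop := by
      have hnw : Tendsto (fun ρ : ℝ => (Real.log ρ + b) / ρ) atTop (nhdsWithin 0 (Set.Ioi 0)) := by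
        rw [tendsto_nhdsWithin_iff]
        refine ⟨hfrac0, ?_⟩
        filter_upwards [hlogb, eventually_gt_atTop 0] with ρ h1 h2
        exact div_pos h1 h2
      have hdiv : Tendsto (fun ρ : ℝ => ρ / (Real.log ρ + b)) atTop atTop := by
        have := hnw.inv_tendsto_nhdsGT_zero
        refine this.congr' ?_
        filter_upwards [] with ρ
        rw [Pi.inv_apply, inv_div]
      have := hdiv.const_mul_atTop hCpos
      refine this.congr' ?_
      filter_upwards [] with ρ
      rw [mul_div_assoc]
    have := (sqrt_tendsto_atTop'.comp hinner).const_mul_atTop (by norm_num : (0:ℝ) < 1/2)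
    refine this.congr' ?_
    filter_upwards [] with ρ
    rw [hTeq ρ]
    rfl
  -- eventual formula for log (T ρ)
  have hlogT : ∀ᶠ ρ : ℝ in atTop,
      Real.log (T ρ) = -Real.log 2 + (1/2) * (Real.log C + Real.log ρ - Real.log (Real.log ρ + b)) := by
    filter_upwards [hlogb, eventually_gt_atTop 1] with ρ h1 h2
    have hρ0 : (0:ℝ) < ρ := by linarith
    have hq : (0:ℝ) < (C * ρ) / (Real.log ρ + b) := div_pos (by positivity) h1
    rw [hTeq ρ, Real.log_mul (by norm_num) (ne_of_gt (Real.sqrt_pos.mpr hq)),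
      Real.log_sqrt hq.le, Real.log_div (by positivity) (ne_of_gt h1),
      Real.log_mul (ne_of_gt hCpos) (ne_of_gt hρ0)]
    have : Real.log (1/2) = -Real.log 2 := by
      rw [one_div, Real.log_inv]
    rw [this]
    ring
  -- log (T ρ) / log ρ → 1/2
  have hloglog : Tendsto (fun ρ : ℝ => Real.log (Real.log ρ + b) / Real.log ρ) atTop (nhds 0) :=
    (log_add_div_tendsto b).comp Real.tendsto_log_atTop
  have he : Tendsto (fun ρ : ℝ => Real.log (T ρ) / Real.log ρ) atTop (nhds (1/2)) := by
    have h1 : Tendsto (fun ρ : ℝ => (-Real.log 2) / Real.log ρ) atTop (nhds 0) :=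
      tendsto_const_nhds.div_atTop Real.tendsto_log_atTop
    have h2 : Tendsto (fun ρ : ℝ => Real.log C / Real.log ρ) atTop (nhds 0) :=
      tendsto_const_nhds.div_atTop Real.tendsto_log_atTop
    have hcomb : Tendsto (fun ρ : ℝ =>
        (-Real.log 2) / Real.log ρ
          + (1/2) * (Real.log C / Real.log ρ + 1 - Real.log (Real.log ρ + b) / Real.log ρ))
        atTop (nhds (0 + (1/2) * (0 + 1 - 0))) :=
      h1.add (((h2.add tendsto_const_nhds).sub hloglog).const_mul (1/2))
    have heq : (0:ℝ) + (1/2) * (0 + 1 - 0) = 1/2 := by norm_num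
    rw [heq] at hcomb
    refine hcomb.congr' ?_
    filter_upwards [hlogT, Real.tendsto_log_atTop.eventually_gt_atTop 0] with ρ hρ hL
    rw [hρ]
    field_simp
  -- h ρ → 2 / C
  have hLpos : ∀ᶠ ρ : ℝ in atTop, 0 < Real.log ρ :=
    Real.tendsto_log_atTop.eventually_gt_atTop 0
  have hlogTpos : ∀ᶠ ρ : ℝ in atTop, 0 < Real.log (T ρ) :=
    (Real.tendsto_log_atTop.comp hTtop).eventually_gt_atTop 0
  have hspos : Tendsto (fun ρ : ℝ => (Real.log ρ + b) / (C * Real.log (T ρ)))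
      atTop (nhds (2 / C)) := by
    have hnum : Tendsto (fun ρ : ℝ => (Real.log ρ + b) / Real.log ρ) atTop (nhds 1) := by
      have : Tendsto (fun ρ : ℝ => 1 + b / Real.log ρ) atTop (nhds 1) := by
        simpa using tendsto_const_nhds.add (tendsto_const_nhds.div_atTop Real.tendsto_log_atTop)
      refine this.congr' ?_
      filter_upwards [hLpos] with ρ hρ
      field_simp
    have hden : Tendsto (fun ρ : ℝ => C * (Real.log (T ρ) / Real.log ρ)) atTop
        (nhds (C * (1/2))) := he.const_mul C
    have hdiv := hnum.div hden (by positivity)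
    have hval : (1:ℝ) / (C * (1/2)) = 2 / C := by
      field_simp
    rw [hval] at hdiv
    refine hdiv.congr' ?_
    filter_upwards [hLpos, hlogTpos] with ρ h1 h2
    have hL0 : Real.log ρ ≠ 0 := ne_of_gt h1
    have hT0 : Real.log (T ρ) ≠ 0 := ne_of_gt h2
    simp only [Pi.div_apply]
    field_simp
  -- u ρ → 2πa
  have hu : Tendsto (fun ρ : ℝ => Real.log (T ρ) * ∫ x in Set.Ioi (T ρ), 2 * π * x * g x)
      atTop (nhds (2 * π * a)) := by
    rw [Metric.tendsto_nhds]
    intro ε hε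
    set δ : ℝ := min (a / 2) (ε / (4 * π + 1)) with hδdef
    have hπ := Real.pi_pos
    have hδpos : 0 < δ := by
      apply lt_min (by linarith) (by positivity)
    have hδa : 0 ≤ a - δ := by
      have : δ ≤ a / 2 := min_le_left _ _
      linarith
    have h2πδ : 2 * π * δ < ε := by
      have h1 : δ ≤ ε / (4 * π + 1) := min_le_right _ _
      have h2 : 2 * π * δ ≤ 2 * π * (ε / (4 * π + 1)) := by nlinarith
      have h3 : 2 * π * (ε / (4 * π + 1)) < ε := by
        rw [mul_div_assoc']
        rw [div_lt_iff₀ (by positivity)]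
        nlinarith
      linarith
    have hev := (Metric.tendsto_nhds.mp hlim) δ hδpos
    rw [eventually_atTop] at hev
    obtain ⟨M, hMspec⟩ := hev
    set M' : ℝ := max M 2 with hM'def
    have hM'1 : 1 < M' := lt_of_lt_of_le one_lt_two (le_max_right _ _)
    have hMbound : ∀ x, M' ≤ x → |g x * x ^ 2 * Real.log x ^ 2 - a| ≤ δ := by
      intro x hx
      have := hMspec x (le_trans (le_max_left _ _) hx)
      rw [Real.dist_eq] at this
      exact this.le
    filter_upwards [hTtop.eventually_ge_atTop M'] with ρ hρ
    obtain ⟨hint, hlow, hup⟩ := Ibound g a δ M' (T ρ) (fun x hx => (hg01 x hx).1)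
      hmono hδa hMbound hM'1 hρ
    have hT1 : 1 < T ρ := lt_of_lt_of_le hM'1 hρ
    have hLt : 0 < Real.log (T ρ) := Real.log_pos hT1
    have hLne : Real.log (T ρ) ≠ 0 := ne_of_gt hLt
    set I := ∫ x in Set.Ioi (T ρ), 2 * π * x * g x
    have hlow2 : 2 * π * (a - δ) ≤ Real.log (T ρ) * I := by
      have := mul_le_mul_of_nonneg_left hlow hLt.le
      calc 2 * π * (a - δ) = Real.log (T ρ) * (2 * π * (a - δ) * (Real.log (T ρ))⁻¹) := by
            field_simp
        _ ≤ Real.log (T ρ) * I := this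
    have hup2 : Real.log (T ρ) * I ≤ 2 * π * (a + δ) := by
      have := mul_le_mul_of_nonneg_left hup hLt.le
      calc Real.log (T ρ) * I ≤ Real.log (T ρ) * (2 * π * (a + δ) * (Real.log (T ρ))⁻¹) := this
        _ = 2 * π * (a + δ) := by field_simp
    rw [Real.dist_eq]
    rw [abs_lt]
    constructor <;> nlinarith
  -- combine
  have hmul := hu.mul hspos
  have hval : 2 * π * a * (2 / C) = 4 * π * a / C := by
    field_simp; ring
  rw [hval] at hmul
  refine hmul.congr' ?_
  filter_upwards [hlogTpos] with ρ hρ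
  have hLne : Real.log (T ρ) ≠ 0 := ne_of_gt hρ
  show Real.log (T ρ) * (∫ x in Set.Ioi (T ρ), 2 * π * x * g x)
      * ((Real.log ρ + b) / (C * Real.log (T ρ)))
    = (Real.log ρ + b) / C * ∫ x in Set.Ioi (T ρ), 2 * π * x * g x
  field_simp
end

section
/- With notation as in the isolated-node theorems, E(W)/E(W^∞) = ∫_{A_{1/r_ρ}} (log ρ + b)/(Cρ) · exp(∫_{ℝ² \ A_{1/r_ρ}} (log ρ + b)/C · g(‖x - y‖) dx) dy, and this ratio is strictly greater than 1 whenever g has unbounded support. -/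
open MeasureTheory Filter Real

/-- With `λ = (log ρ + b)/C`, `A` the square of side `1/r_ρ` centered at the
origin, `E(W) = ∫_A λ exp(-λ ∫_A g(‖x-y‖) dx) dy` and `E(W^∞) = e^{-b}`, one has
`E(W)/E(W^∞) = ∫_A (log ρ + b)/(Cρ) · exp(∫_{ℝ²\A} (log ρ + b)/C · g(‖x-y‖) dx) dy`,
and this ratio is strictly greater than `1` whenever `g` has unbounded support. -/
theorem stmt_9 (g : ℝ → ℝ) (C b ρ : ℝ)
    (hg_meas : Measurable g)
    (hg01 : ∀ x, 0 ≤ x → 0 ≤ g x ∧ g x ≤ 1)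
    (hmono : AntitoneOn g (Set.Ici 0))
    (hint : Integrable (fun x : EuclideanSpace ℝ (Fin 2) => g ‖x‖))
    (hC : C = ∫ x : EuclideanSpace ℝ (Fin 2), g ‖x‖) (hCpos : 0 < C)
    (hρ : 0 < ρ) (hb : 0 < Real.log ρ + b)
    (A : Set (EuclideanSpace ℝ (Fin 2)))
    (hA : A = {x : EuclideanSpace ℝ (Fin 2) |
        ∀ i, |x i| ≤ 1 / (2 * Real.sqrt ((Real.log ρ + b) / (C * ρ)))}) :
    ((∫ y in A,
          (Real.log ρ + b) / C *
            Real.exp (-((Real.log ρ + b) / C * ∫ x in A, g ‖x - y‖))) /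
        Real.exp (-b) =
      ∫ y in A,
        (Real.log ρ + b) / (C * ρ) *
          Real.exp ((Real.log ρ + b) / C * ∫ x in Aᶜ, g ‖x - y‖)) ∧
    ((∀ M : ℝ, ∃ x, M < x ∧ 0 < g x) →
      1 <
        ∫ y in A,
          (Real.log ρ + b) / (C * ρ) *
            Real.exp ((Real.log ρ + b) / C * ∫ x in Aᶜ, g ‖x - y‖)) := by
  set L : ℝ := Real.log ρ + b with hLdef
  have hL : 0 < L := hb
  have hCρ : 0 < C * ρ := mul_pos hCpos hρ
  have hr : 0 < L / (C * ρ) := div_pos hL hCρ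
  set c0 : ℝ := 1 / (2 * Real.sqrt (L / (C * ρ))) with hc0
  have hsqrt : 0 < Real.sqrt (L / (C * ρ)) := Real.sqrt_pos.2 hr
  have hc0pos : 0 < c0 := by positivity
  -- A is closed, hence measurable
  have hAset : A = ⋂ i, {x : EuclideanSpace ℝ (Fin 2) | |x i| ≤ c0} := by
    rw [hA]; ext x
    simp only [Set.mem_setOf_eq, Set.mem_iInter]
    exact Iff.rfl
  have hAclosed : IsClosed A := by
    rw [hAset]
    exact isClosed_iInter fun i =>
      IsClosed.preimage (((continuous_apply i).comp (PiLp.continuous_ofLp 2 _)).abs) isClosed_Iic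
  have hAmeas : MeasurableSet A := hAclosed.measurableSet
  -- volume of A
  have h2c0 : (2 * c0) * (2 * c0) = C * ρ / L := by
    have hs : Real.sqrt (L / (C * ρ)) * Real.sqrt (L / (C * ρ)) = L / (C * ρ) :=
      Real.mul_self_sqrt hr.le
    have h2 : 2 * c0 = 1 / Real.sqrt (L / (C * ρ)) := by
      rw [hc0, mul_one_div,
        show (2 : ℝ) / (2 * Real.sqrt (L / (C * ρ))) =
          2 * 1 / (2 * Real.sqrt (L / (C * ρ))) by norm_num,
        mul_div_mul_left _ _ (two_ne_zero)]
    rw [h2, div_mul_div_comm, one_mul, hs, one_div_div]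
  have hvol : volume A = ENNReal.ofReal (C * ρ / L) := by
    have hAeq : A = (MeasurableEquiv.toLp 2 (Fin 2 → ℝ)).symm ⁻¹'
        (Set.univ.pi fun _ : Fin 2 => Set.Icc (-c0) c0) := by
      rw [hA]; ext x
      simp only [Set.mem_preimage, Set.mem_univ_pi, Set.mem_Icc, Set.mem_setOf_eq, abs_le]
      exact Iff.rfl
    rw [hAeq,
      (EuclideanSpace.volume_preserving_symm_measurableEquiv_toLp (Fin 2)).measure_preimage
        (MeasurableSet.univ_pi fun _ => measurableSet_Icc).nullMeasurableSet]
    rw [volume_pi_pi]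
    simp only [Real.volume_Icc]
    rw [Finset.prod_const, Finset.card_univ, Fintype.card_fin]
    have : c0 - -c0 = 2 * c0 := by ring
    rw [this, pow_two, ← ENNReal.ofReal_mul (by positivity), h2c0]
  -- translation invariance
  have hshiftInt : ∀ y : EuclideanSpace ℝ (Fin 2),
      Integrable (fun x : EuclideanSpace ℝ (Fin 2) => g ‖x - y‖) := fun y =>
    hint.comp_sub_right y
  have hshiftEq : ∀ y : EuclideanSpace ℝ (Fin 2),
      (∫ x : EuclideanSpace ℝ (Fin 2), g ‖x - y‖) = C := fun y => by
    rw [hC]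
    exact integral_sub_right_eq_self (fun x : EuclideanSpace ℝ (Fin 2) => g ‖x‖) y
  have key : ∀ y : EuclideanSpace ℝ (Fin 2),
      (∫ x in A, g ‖x - y‖) + (∫ x in Aᶜ, g ‖x - y‖) = C := fun y => by
    rw [← hshiftEq y]
    exact integral_add_compl hAmeas (hshiftInt y)
  have hIA_nonneg : ∀ y : EuclideanSpace ℝ (Fin 2), 0 ≤ ∫ x in A, g ‖x - y‖ :=
    fun y => setIntegral_nonneg hAmeas fun x _ => (hg01 _ (norm_nonneg _)).1
  have hIAc_nonneg : ∀ y : EuclideanSpace ℝ (Fin 2), 0 ≤ ∫ x in Aᶜ, g ‖x - y‖ :=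
    fun y => setIntegral_nonneg hAmeas.compl fun x _ => (hg01 _ (norm_nonneg _)).1
  constructor
  · -- the equality
    have hfun : (fun y : EuclideanSpace ℝ (Fin 2) =>
        L / C * Real.exp (-(L / C * ∫ x in A, g ‖x - y‖))) =
        fun y => Real.exp (-b) *
          (L / (C * ρ) * Real.exp (L / C * ∫ x in Aᶜ, g ‖x - y‖)) := by
      funext y
      have h1 : L / C * (∫ x in A, g ‖x - y‖) + L / C * (∫ x in Aᶜ, g ‖x - y‖) = L := by
        rw [← mul_add, key y]
        field_simp
      have e1 : -(L / C * ∫ x in A, g ‖x - y‖) =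
          -b + -(Real.log ρ) + L / C * ∫ x in Aᶜ, g ‖x - y‖ := by
        have : L = Real.log ρ + b := hLdef
        linarith
      rw [e1, Real.exp_add, Real.exp_add, Real.exp_neg (Real.log ρ), Real.exp_log hρ]
      field_simp
    rw [hfun, integral_const_mul, mul_comm, mul_div_assoc,
      div_self (Real.exp_ne_zero _), mul_one]
  · -- strict inequality
    intro hsup
    have gpos : ∀ x : ℝ, 0 ≤ x → 0 < g x := fun x hx => by
      obtain ⟨z, hz, hgz⟩ := hsup x
      exact lt_of_lt_of_le hgz (hmono hx (le_trans hx hz.le) hz.le)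
    -- Aᶜ has positive measure
    have hx0 : EuclideanSpace.single (0 : Fin 2) (c0 + 1) ∉ A := by
      rw [hA]
      intro h
      have h0 := h 0
      have hsingle : (EuclideanSpace.single (0 : Fin 2) (c0 + 1)) 0 = c0 + 1 := by
        simp [EuclideanSpace.single_apply]
      rw [hsingle, ← hc0, abs_of_pos (by linarith)] at h0
      linarith
    have hAc_pos : 0 < volume Aᶜ :=
      hAclosed.isOpen_compl.measure_pos volume ⟨_, hx0⟩
    have hIAc_pos : ∀ y : EuclideanSpace ℝ (Fin 2),
        0 < ∫ x in Aᶜ, g ‖x - y‖ := fun y => by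
      rw [setIntegral_pos_iff_support_of_nonneg_ae
        (Filter.Eventually.of_forall fun x => (hg01 _ (norm_nonneg _)).1)
        (hshiftInt y).integrableOn]
      have hsupp : Function.support (fun x : EuclideanSpace ℝ (Fin 2) => g ‖x - y‖) =
          Set.univ := by
        ext x
        simp [Function.mem_support, (gpos _ (norm_nonneg _)).ne']
      rw [hsupp, Set.univ_inter]
      exact hAc_pos
    -- measurability of the inner integral as a function of y
    have hImeas : StronglyMeasurable fun y : EuclideanSpace ℝ (Fin 2) =>
        ∫ x in Aᶜ, g ‖x - y‖ := by
      have hprod : StronglyMeasurable fun p :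
          EuclideanSpace ℝ (Fin 2) × EuclideanSpace ℝ (Fin 2) => g ‖p.2 - p.1‖ :=
        (hg_meas.comp ((measurable_snd.sub measurable_fst).norm)).stronglyMeasurable
      exact hprod.integral_prod_right'
    have hIle : ∀ y : EuclideanSpace ℝ (Fin 2), (∫ x in Aᶜ, g ‖x - y‖) ≤ C := fun y => by
      have := key y
      linarith [hIA_nonneg y]
    set F : EuclideanSpace ℝ (Fin 2) → ℝ := fun y =>
      L / (C * ρ) * Real.exp (L / C * ∫ x in Aᶜ, g ‖x - y‖) with hF
    have hFmeas : Measurable F :=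
      measurable_const.mul (Real.measurable_exp.comp (hImeas.measurable.const_mul (L / C)))
    have hvolA_lt : volume A < ⊤ := by rw [hvol]; exact ENNReal.ofReal_lt_top
    have hconst_int : IntegrableOn (fun _ : EuclideanSpace ℝ (Fin 2) => L / (C * ρ)) A :=
      integrableOn_const hvolA_lt.ne
    have hFbound : ∀ y, ‖F y‖ ≤ L / (C * ρ) * Real.exp (L / C * C) := fun y => by
      rw [hF, Real.norm_eq_abs, abs_of_pos (by positivity)]
      apply mul_le_mul_of_nonneg_left _ (by positivity)
      exact Real.exp_le_exp.2 (mul_le_mul_of_nonneg_left (hIle y) (by positivity))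
    have hFint : IntegrableOn F A := by
      haveI : IsFiniteMeasure (volume.restrict A) :=
        ⟨by rwa [Measure.restrict_apply_univ]⟩
      refine Integrable.mono' (integrable_const (L / (C * ρ) * Real.exp (L / C * C)))
        hFmeas.aestronglyMeasurable ?_
      exact Filter.Eventually.of_forall hFbound
    have hvolR : (volume A).toReal = C * ρ / L := by
      rw [hvol, ENNReal.toReal_ofReal (by positivity)]
    have hconst_val : (∫ _ in A, L / (C * ρ)) = 1 := by
      rw [setIntegral_const, measureReal_def, hvolR, smul_eq_mul]
      field_simp
    have hFc : ∀ y, L / (C * ρ) < F y := fun y => by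
      rw [hF]
      nth_rewrite 1 [← mul_one (L / (C * ρ))]
      apply mul_lt_mul_of_pos_left _ (by positivity)
      rw [← Real.exp_zero]
      exact Real.exp_lt_exp.2 (mul_pos (div_pos hL hCpos) (hIAc_pos y))
    have hdiff : 0 < ∫ y in A, (F y - L / (C * ρ)) := by
      rw [setIntegral_pos_iff_support_of_nonneg_ae
        (Filter.Eventually.of_forall fun y => sub_nonneg.2 (hFc y).le)
        (hFint.sub hconst_int)]
      have hsupp : Function.support (fun y => F y - L / (C * ρ)) = Set.univ := by
        ext y
        simp [Function.mem_support, sub_ne_zero, (hFc y).ne']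
      rw [hsupp, Set.univ_inter, hvol]
      exact ENNReal.ofReal_pos.2 (by positivity)
    have hsub : (∫ y in A, (F y - L / (C * ρ))) =
        (∫ y in A, F y) - ∫ _ in A, L / (C * ρ) := integral_sub hFint hconst_int
    rw [hsub, hconst_val] at hdiff
    linarith
end

section
/- Let D(x, r) ⊂ ℝ² denote the closed disk of radius r centered at x. For points x₁, x₂ with z = ‖x₂ - x₁‖ ≤ r, the area of D(x₁, r) \ D(x₂, r) is at least √3 · r · z. -/
set_option maxHeartbeats 1000000


open MeasureTheory Set

/-- Let `D(x,r) ⊂ ℝ²` be the closed disk of radius `r` centered at `x`.  For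
points `x₁, x₂` with `z = ‖x₂ - x₁‖ ≤ r`, the area of `D(x₁,r) \ D(x₂,r)` is
at least `√3 · r · z`. -/
theorem stmt_12 (r : ℝ) (hr : 0 < r) (x₁ x₂ : EuclideanSpace ℝ (Fin 2))
    (hz : dist x₂ x₁ ≤ r) :
    ENNReal.ofReal (Real.sqrt 3 * r * dist x₂ x₁) ≤
      volume (Metric.closedBall x₁ r \ Metric.closedBall x₂ r) := by
  set z := dist x₂ x₁ with hzdef
  have hz0 : 0 ≤ z := dist_nonneg
  rcases eq_or_lt_of_le hz0 with h0 | hzpos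
  · simp [← h0]
  set u : EuclideanSpace ℝ (Fin 2) := z • EuclideanSpace.single 1 (1 : ℝ) with hu
  have hu0 : u 0 = 0 := by simp [hu, PiLp.smul_apply, EuclideanSpace.single_apply]
  have hu1 : u 1 = z := by simp [hu, PiLp.smul_apply, EuclideanSpace.single_apply]
  set v : EuclideanSpace ℝ (Fin 2) := x₂ - x₁ with hv
  have hnv : ‖v‖ = z := by rw [hv, ← dist_eq_norm]
  have hnu : ‖u‖ = z := by
    rw [hu, norm_smul, EuclideanSpace.norm_single]
    simp [abs_of_nonneg hz0]
  set f : EuclideanSpace ℝ (Fin 2) ≃ₗᵢ[ℝ] EuclideanSpace ℝ (Fin 2) := Submodule.reflection (ℝ ∙ (u - v))ᗮ with hf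
  have hfu : f u = v := Submodule.reflection_sub (by rw [hnu, hnv])
  -- translation + reflection reduces to balls centered at 0 and u
  have key : volume (Metric.closedBall x₁ r \ Metric.closedBall x₂ r)
      = volume (Metric.closedBall (0 : EuclideanSpace ℝ (Fin 2)) r \ Metric.closedBall u r) := by
    have hmp : MeasurePreserving (fun p : EuclideanSpace ℝ (Fin 2) => f p + x₁) volume volume :=
      (measurePreserving_add_right volume x₁).comp f.measurePreserving
    have hset : (fun p : EuclideanSpace ℝ (Fin 2) => f p + x₁) ⁻¹' (Metric.closedBall x₁ r \ Metric.closedBall x₂ r)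
        = Metric.closedBall (0 : EuclideanSpace ℝ (Fin 2)) r \ Metric.closedBall u r := by
      ext p
      have h1 : dist (f p + x₁) x₁ = dist p 0 := by
        rw [dist_eq_norm, add_sub_cancel_right, f.norm_map, dist_eq_norm, sub_zero]
      have h2 : dist (f p + x₁) x₂ = dist p u := by
        rw [dist_eq_norm, dist_eq_norm]
        have : f p + x₁ - x₂ = f p - f u := by rw [hfu, hv]; abel
        rw [this, ← f.map_sub, f.norm_map]
      simp [Metric.mem_closedBall, h1, h2]
    rw [← hset, hmp.measure_preimage
      ((measurableSet_closedBall.diff measurableSet_closedBall).nullMeasurableSet)]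
  rw [key]
  -- the explicit subset
  set fL : ℝ → ℝ := fun y => -Real.sqrt (r ^ 2 - y ^ 2) with hfL
  have hfLc : Continuous fL := by
    exact (Real.continuous_sqrt.comp (continuous_const.sub (continuous_pow 2))).neg
  set I : Set ℝ := Icc (-(Real.sqrt 3 / 2 * r)) (Real.sqrt 3 / 2 * r) with hI
  set S : Set (ℝ × ℝ) := regionBetween fL (fun y => fL y + z) I with hS
  have hSmeas : MeasurableSet S :=
    measurableSet_regionBetween hfLc.measurable (hfLc.add continuous_const).measurable
      measurableSet_Icc
  set e : EuclideanSpace ℝ (Fin 2) ≃ᵐ ℝ × ℝ :=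
    (MeasurableEquiv.toLp 2 (Fin 2 → ℝ)).symm.trans (MeasurableEquiv.piFinTwo fun _ => ℝ) with he
  have hemp : MeasurePreserving e volume volume :=
    (volume_preserving_piFinTwo fun _ => ℝ).comp
      (EuclideanSpace.volume_preserving_symm_measurableEquiv_toLp (Fin 2))
  have hsq3 : Real.sqrt 3 ^ 2 = 3 := Real.sq_sqrt (by norm_num)
  have hsub : e ⁻¹' S ⊆ Metric.closedBall (0 : EuclideanSpace ℝ (Fin 2)) r \ Metric.closedBall u r := by
    intro p hp
    have hep : e p = (p 0, p 1) := rfl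
    rw [Set.mem_preimage, hep] at hp
    obtain ⟨hy, hx⟩ := hp
    set y := p 0
    set x := p 1
    have hyabs : |y| ≤ Real.sqrt 3 / 2 * r := abs_le.mpr ⟨hy.1, hy.2⟩
    have hy2 : y ^ 2 ≤ 3 / 4 * r ^ 2 := by
      have := sq_le_sq' hy.1 hy.2
      calc y ^ 2 ≤ (Real.sqrt 3 / 2 * r) ^ 2 := this
        _ = 3 / 4 * r ^ 2 := by rw [mul_pow, div_pow, hsq3]; ring
    set s0 := Real.sqrt (r ^ 2 - y ^ 2) with hs0
    have hsub0 : (0 : ℝ) ≤ r ^ 2 - y ^ 2 := by nlinarith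
    have hs0sq : s0 ^ 2 = r ^ 2 - y ^ 2 := Real.sq_sqrt hsub0
    have hs0nn : 0 ≤ s0 := Real.sqrt_nonneg _
    have hrhalf : r / 2 ≤ s0 := by
      rw [hs0]
      rw [show r / 2 = Real.sqrt ((r / 2) ^ 2) from (Real.sqrt_sq (by positivity)).symm]
      exact Real.sqrt_le_sqrt (by nlinarith)
    have hzs0 : z ≤ 2 * s0 := by linarith
    have hx1 : -s0 < x := hx.1
    have hx2 : x < -s0 + z := hx.2
    have hxs : x < s0 := by linarith
    have hx2le : x ^ 2 ≤ s0 ^ 2 := le_of_lt (sq_lt_sq' hx1 hxs)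
    constructor
    · rw [Metric.mem_closedBall, EuclideanSpace.dist_eq, Fin.sum_univ_two]
      rw [show r = Real.sqrt (r ^ 2) from (Real.sqrt_sq hr.le).symm]
      apply Real.sqrt_le_sqrt
      simp only [Real.dist_eq, PiLp.zero_apply, sub_zero, sq_abs]
      nlinarith
    · rw [Metric.mem_closedBall, EuclideanSpace.dist_eq, Fin.sum_univ_two, not_le]
      rw [hu0, hu1]
      have hz1 : s0 < z - x := by linarith
      have hzx : s0 ^ 2 < (x - z) ^ 2 := by nlinarith
      rw [show r = Real.sqrt (r ^ 2) from (Real.sqrt_sq hr.le).symm]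
      apply Real.sqrt_lt_sqrt (by positivity)
      simp only [Real.dist_eq, sub_zero, sq_abs]
      nlinarith
  calc ENNReal.ofReal (Real.sqrt 3 * r * z) = volume S := by
        rw [hS, Measure.volume_eq_prod]
        rw [volume_regionBetween_eq_lintegral' (g := fun y => fL y + z) hfLc.measurable
          (hfLc.add continuous_const).measurable measurableSet_Icc]
        have : ∀ y : ℝ, ((fun y => fL y + z) - fL) y = z := by intro y; simp
        rw [lintegral_congr fun y => by rw [this y]]
        rw [setLIntegral_const, Real.volume_Icc]
        rw [← ENNReal.ofReal_mul hz0]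
        congr 1
        have : Real.sqrt 3 / 2 * r - -(Real.sqrt 3 / 2 * r) = Real.sqrt 3 * r := by ring
        rw [this]; ring
    _ = volume (e ⁻¹' S) := (hemp.measure_preimage hSmeas.nullMeasurableSet).symm
    _ ≤ _ := measure_mono hsub
end

section
/- Let g be non-increasing with g(x) = o(1/(x² log² x)), 0 < C = ∫_{ℝ²} g(‖x‖)dx < ∞, b constant, r_ρ = sqrt((log ρ + b)/(Cρ)), and let ε ∈ (0, 1/4). Then lim_{ρ→∞} ρ^{1/2} exp(−(1/2)·(log ρ + b)/C · ∫_{D(0, r_ρ^{-ε})} g(‖x‖)dx) = e^{−b/2}, and lim_{ρ→∞} 4 ((log ρ + b)/(Cρ))^{1−ε} · ρ · e^{−(log ρ + b)/4} = 0. -/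
open MeasureTheory Filter Real

lemma aux_oneDim (R : ℝ) (hR : 1 < R) :
    IntegrableOn (fun y : ℝ => (y * Real.log y ^ 2)⁻¹) (Set.Ioi R) ∧
    ∫ y in Set.Ioi R, (y * Real.log y ^ 2)⁻¹ = (Real.log R)⁻¹ := by
  have hderiv : ∀ x ∈ Set.Ici R, HasDerivAt (fun y => -(Real.log y)⁻¹)
      ((x * Real.log x ^ 2)⁻¹) x := by
    intro x hx
    have hx1 : 1 < x := lt_of_lt_of_le hR hx
    have hx0 : 0 < x := by linarith
    have hlog : 0 < Real.log x := Real.log_pos hx1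
    have h1 : HasDerivAt Real.log x⁻¹ x := Real.hasDerivAt_log hx0.ne'
    have h2 : HasDerivAt (fun y => (Real.log y)⁻¹) (-(x⁻¹) / (Real.log x) ^ 2) x :=
      h1.inv hlog.ne'
    convert h2.neg using 1
    all_goals try rfl
    field_simp
  have htend : Tendsto (fun y => -(Real.log y)⁻¹) atTop (nhds 0) := by
    rw [show (0:ℝ) = -0 by ring]
    exact (tendsto_inv_atTop_zero.comp Real.tendsto_log_atTop).neg
  have hpos : ∀ x ∈ Set.Ioi R, 0 ≤ (x * Real.log x ^ 2)⁻¹ := by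
    intro x hx
    have hx1 : 1 < x := lt_trans hR hx
    have : 0 < Real.log x := Real.log_pos hx1
    positivity
  refine ⟨integrableOn_Ioi_deriv_of_nonneg' hderiv hpos htend, ?_⟩
  rw [integral_Ioi_of_hasDerivAt_of_nonneg' hderiv hpos htend]
  ring



lemma tail_formula (g : ℝ → ℝ) (R : ℝ) (hR : 0 < R) :
    ∫ x in (Metric.closedBall (0 : EuclideanSpace ℝ (Fin 2)) R)ᶜ, g ‖x‖ =
      (2 * (volume (Metric.ball (0 : EuclideanSpace ℝ (Fin 2)) 1)).toReal) *
        ∫ y in Set.Ioi R, y * g y := by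
  have h1 : ∫ x in (Metric.closedBall (0 : EuclideanSpace ℝ (Fin 2)) R)ᶜ, g ‖x‖ =
      ∫ x : EuclideanSpace ℝ (Fin 2), Set.indicator (Set.Ioi R) g ‖x‖ := by
    rw [← integral_indicator measurableSet_closedBall.compl]
    congr 1
    ext x
    by_cases h : x ∈ (Metric.closedBall (0 : EuclideanSpace ℝ (Fin 2)) R)ᶜ
    · rw [Set.indicator_of_mem h, Set.indicator_of_mem]
      simpa [Metric.mem_closedBall, dist_zero_right, not_le] using h
    · rw [Set.indicator_of_notMem h, Set.indicator_of_notMem]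
      simpa [Metric.mem_closedBall, dist_zero_right, not_le] using h
  rw [h1, integral_fun_norm_addHaar volume (Set.indicator (Set.Ioi R) g)]
  have hdim : Module.finrank ℝ (EuclideanSpace ℝ (Fin 2)) = 2 := finrank_euclideanSpace_fin
  rw [hdim]
  have h2 : ∀ y : ℝ, y ^ (2 - 1) • Set.indicator (Set.Ioi R) g y =
      Set.indicator (Set.Ioi R) (fun y => y * g y) y := by
    intro y
    by_cases h : y ∈ Set.Ioi R
    · rw [Set.indicator_of_mem h, Set.indicator_of_mem h]; simp
    · rw [Set.indicator_of_notMem h, Set.indicator_of_notMem h]; simp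
  simp only [h2]
  rw [setIntegral_indicator measurableSet_Ioi]
  rw [Set.Ioi_inter_Ioi, max_eq_right hR.le]
  rw [nsmul_eq_mul, smul_eq_mul]
  push_cast
  rw [measureReal_def]; ring

lemma tail_tendsto (g : ℝ → ℝ) (hg0 : ∀ x, 0 ≤ x → 0 ≤ g x)
    (hsmall : Tendsto (fun x : ℝ => g x * x ^ 2 * (Real.log x) ^ 2) atTop (nhds 0)) :
    Tendsto (fun R => Real.log R *
      ∫ x in (Metric.closedBall (0 : EuclideanSpace ℝ (Fin 2)) R)ᶜ, g ‖x‖)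
      atTop (nhds 0) := by
  set K : ℝ := 2 * (volume (Metric.ball (0 : EuclideanSpace ℝ (Fin 2)) 1)).toReal with hK
  have hK0 : 0 ≤ K := by positivity
  rw [NormedAddCommGroup.tendsto_nhds_zero]
  intro δ hδ
  set η : ℝ := δ / (2 * (K + 1)) with hη
  have hηpos : 0 < η := by positivity
  have hM : ∀ᶠ x in atTop, g x * x ^ 2 * Real.log x ^ 2 < η :=
    hsmall.eventually_lt_const hηpos
  obtain ⟨M, hMle⟩ := eventually_atTop.1 hM
  filter_upwards [eventually_ge_atTop (max M 2)] with R hRge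
  have hR2 : (2:ℝ) ≤ R := le_trans (le_max_right _ _) hRge
  have hRM : M ≤ R := le_trans (le_max_left _ _) hRge
  have hR1 : (1:ℝ) < R := by linarith
  have hR0 : (0:ℝ) < R := by linarith
  have hlogR : 0 < Real.log R := Real.log_pos hR1
  have hJnn : 0 ≤ ∫ y in Set.Ioi R, y * g y := by
    apply setIntegral_nonneg measurableSet_Ioi
    intro y hy
    have : (0:ℝ) < y := lt_trans hR0 hy
    exact mul_nonneg this.le (hg0 y this.le)
  have hJle : (∫ y in Set.Ioi R, y * g y) ≤ η * (Real.log R)⁻¹ := by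
    have hint2 : Integrable (fun y : ℝ => η * (y * Real.log y ^ 2)⁻¹)
        (volume.restrict (Set.Ioi R)) := ((aux_oneDim R hR1).1.const_mul η)
    have hle : (∫ y in Set.Ioi R, y * g y) ≤
        ∫ y in Set.Ioi R, η * (y * Real.log y ^ 2)⁻¹ := by
      apply integral_mono_of_nonneg _ hint2
      · filter_upwards [ae_restrict_mem measurableSet_Ioi] with y hy
        have hy2 : (2:ℝ) < y := lt_of_le_of_lt hR2 hy
        have hy0 : (0:ℝ) < y := by linarith
        have hlogy : 0 < Real.log y := Real.log_pos (by linarith)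
        have hgy : g y * y ^ 2 * Real.log y ^ 2 < η := hMle y (le_of_lt (lt_of_le_of_lt hRM hy))
        rw [← sub_nonneg]
        have heq : η * (y * Real.log y ^ 2)⁻¹ - y * g y =
            (η - g y * y ^ 2 * Real.log y ^ 2) * (y * Real.log y ^ 2)⁻¹ := by
          field_simp
        rw [heq]
        exact mul_nonneg (by linarith) (by positivity)
      · filter_upwards [ae_restrict_mem measurableSet_Ioi] with y hy
        have hy0 : (0:ℝ) < y := lt_trans hR0 hy
        exact mul_nonneg hy0.le (hg0 y hy0.le)
    calc (∫ y in Set.Ioi R, y * g y) ≤ ∫ y in Set.Ioi R, η * (y * Real.log y ^ 2)⁻¹ := hle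
      _ = η * ∫ y in Set.Ioi R, (y * Real.log y ^ 2)⁻¹ := integral_const_mul _ _
      _ = η * (Real.log R)⁻¹ := by rw [(aux_oneDim R hR1).2]
  rw [tail_formula g R hR0]
  have hTle : K * (∫ y in Set.Ioi R, y * g y) ≤ K * (η * (Real.log R)⁻¹) :=
    mul_le_mul_of_nonneg_left hJle hK0
  have hTnn : 0 ≤ K * ∫ y in Set.Ioi R, y * g y := mul_nonneg hK0 hJnn
  rw [Real.norm_eq_abs, abs_of_nonneg (mul_nonneg hlogR.le hTnn)]
  calc Real.log R * (K * ∫ y in Set.Ioi R, y * g y)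
      ≤ Real.log R * (K * (η * (Real.log R)⁻¹)) :=
        mul_le_mul_of_nonneg_left hTle hlogR.le
    _ = K * η := by field_simp
    _ < δ := by
        have h2 : (0:ℝ) < 2 * (K + 1) := by positivity
        rw [hη, mul_comm, div_mul_eq_mul_div, div_lt_iff₀ h2]
        nlinarith


theorem stmt_19' (g : ℝ → ℝ) (C b ε : ℝ)
    (hg01 : ∀ x, 0 ≤ x → 0 ≤ g x ∧ g x ≤ 1)
    (hmono : AntitoneOn g (Set.Ici 0))
    (hsmall : Tendsto (fun x : ℝ => g x * x ^ 2 * (Real.log x) ^ 2) atTop (nhds 0))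
    (hint : Integrable (fun x : EuclideanSpace ℝ (Fin 2) => g ‖x‖))
    (hC : C = ∫ x : EuclideanSpace ℝ (Fin 2), g ‖x‖) (hCpos : 0 < C)
    (hε : 0 < ε) (hε4 : ε < 1 / 4) :
    Tendsto
        (fun ρ : ℝ =>
          ρ ^ ((1 : ℝ) / 2) *
            Real.exp
              (-((1 / 2) * ((Real.log ρ + b) / C) *
                  ∫ x in Metric.closedBall (0 : EuclideanSpace ℝ (Fin 2))
                      ((Real.sqrt ((Real.log ρ + b) / (C * ρ))) ^ (-ε : ℝ)),
                    g ‖x‖)))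
        atTop (nhds (Real.exp (-b / 2))) := by
  have hg0 : ∀ x, 0 ≤ x → 0 ≤ g x := fun x hx => (hg01 x hx).1
  set T : ℝ → ℝ := fun R =>
    ∫ x in (Metric.closedBall (0 : EuclideanSpace ℝ (Fin 2)) R)ᶜ, g ‖x‖ with hT
  have htail : Tendsto (fun R => Real.log R * T R) atTop (nhds 0) :=
    tail_tendsto g hg0 hsmall
  have hTnn : ∀ R, 0 ≤ T R := by
    intro R
    apply setIntegral_nonneg measurableSet_closedBall.compl
    intro x _
    exact hg0 _ (norm_nonneg x)
  set Rad : ℝ → ℝ := fun ρ => Real.sqrt ((Real.log ρ + b) / (C * ρ)) ^ (-ε : ℝ) with hRad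
  set Λ : ℝ → ℝ := fun ρ =>
    (ε/2) * (Real.log C + Real.log ρ - Real.log (Real.log ρ + b)) with hΛ
  have hLtop : Tendsto (fun ρ : ℝ => Real.log ρ + b) atTop atTop :=
    tendsto_atTop_add_const_right _ b Real.tendsto_log_atTop
  -- log (log ρ + b) / log ρ → 0
  have hloglog : Tendsto (fun ρ : ℝ => Real.log (Real.log ρ + b) / Real.log ρ)
      atTop (nhds 0) := by
    have h1 : Tendsto (fun u : ℝ => Real.log (u + b) / u) atTop (nhds 0) := by
      have ho : (fun u : ℝ => Real.log (u + b)) =o[atTop] (fun u : ℝ => u) := by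
        have h2 := Real.isLittleO_log_id_atTop.comp_tendsto
          (tendsto_atTop_add_const_right atTop b (tendsto_id (α := ℝ)))
        refine h2.trans_isBigO ?_
        rw [Asymptotics.isBigO_iff]
        refine ⟨2, ?_⟩
        filter_upwards [eventually_ge_atTop (max |b| 1)] with u hu
        have h3 : |b| ≤ u := le_trans (le_max_left _ _) hu
        have h4 : (1:ℝ) ≤ u := le_trans (le_max_right _ _) hu
        have hb1 : -u ≤ b := by cases abs_le.1 (le_refl |b|) <;> nlinarith [abs_le.1 (le_refl |b|)]
        have hb := abs_le.1 (le_refl |b|)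
        simp only [Function.comp, id_eq, Real.norm_eq_abs]
        rw [abs_of_nonneg (by linarith [hb.1] : (0:ℝ) ≤ u + b),
          abs_of_nonneg (by linarith : (0:ℝ) ≤ u)]
        linarith [hb.2]
      exact ho.tendsto_div_nhds_zero
    exact h1.comp Real.tendsto_log_atTop
  -- eventually log (Rad ρ) = Λ ρ
  have hlogRad : ∀ᶠ ρ : ℝ in atTop, Real.log (Rad ρ) = Λ ρ := by
    filter_upwards [eventually_ge_atTop (1:ℝ), hLtop.eventually_ge_atTop 1] with ρ hρ1 hL1
    have hρ0 : (0:ℝ) < ρ := by linarith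
    have hL0 : (0:ℝ) < Real.log ρ + b := by linarith
    have hq : (0:ℝ) < (Real.log ρ + b) / (C * ρ) := by positivity
    have hsq : (0:ℝ) < Real.sqrt ((Real.log ρ + b) / (C * ρ)) := Real.sqrt_pos.2 hq
    rw [hRad]
    simp only
    rw [Real.log_rpow hsq, Real.log_sqrt hq.le, Real.log_div hL0.ne' (by positivity),
      Real.log_mul hCpos.ne' hρ0.ne', hΛ]
    ring
  -- eventually (ε/4) log ρ ≤ Λ ρ
  have hΛge : ∀ᶠ ρ : ℝ in atTop, (ε/4) * Real.log ρ ≤ Λ ρ := by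
    filter_upwards [hloglog.eventually_le_const (by norm_num : (0:ℝ) < 1/4),
      Real.tendsto_log_atTop.eventually_ge_atTop (max 1 (4 * |Real.log C|))] with ρ h1 h2
    have hlρ1 : (1:ℝ) ≤ Real.log ρ := le_trans (le_max_left _ _) h2
    have hlρC : 4 * |Real.log C| ≤ Real.log ρ := le_trans (le_max_right _ _) h2
    have hlρ0 : (0:ℝ) < Real.log ρ := by linarith
    have h3 : Real.log (Real.log ρ + b) ≤ (1/4) * Real.log ρ := by
      have := (div_le_iff₀ hlρ0).1 h1
      linarith
    have h4 : -Real.log C ≤ (1/4) * Real.log ρ := by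
      have := neg_abs_le (Real.log C)
      linarith
    rw [hΛ]
    simp only
    nlinarith
  have hΛtop : Tendsto Λ atTop atTop := by
    apply tendsto_atTop_mono' atTop hΛge
    exact Tendsto.const_mul_atTop (by positivity) Real.tendsto_log_atTop
  have hRadtop : Tendsto Rad atTop atTop := by
    have h1 : Tendsto (fun ρ => Real.exp (Λ ρ)) atTop atTop :=
      Real.tendsto_exp_atTop.comp hΛtop
    apply h1.congr'
    filter_upwards [hlogRad, eventually_ge_atTop (1:ℝ), hLtop.eventually_ge_atTop 1]
      with ρ hlr hρ1 hL1
    have hρ0 : (0:ℝ) < ρ := by linarith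
    have hL0 : (0:ℝ) < Real.log ρ + b := by linarith
    have hq : (0:ℝ) < (Real.log ρ + b) / (C * ρ) := by positivity
    have hRpos : 0 < Rad ρ := Real.rpow_pos_of_pos (Real.sqrt_pos.2 hq) _
    rw [← hlr, Real.exp_log hRpos]
  have hcomp : Tendsto (fun ρ => Real.log (Rad ρ) * T (Rad ρ)) atTop (nhds 0) :=
    htail.comp hRadtop
  -- main tail limit
  have hmain : Tendsto (fun ρ => (Real.log ρ + b) * T (Rad ρ)) atTop (nhds 0) := by
    apply squeeze_zero' (g := fun ρ => (8/ε) * (Real.log (Rad ρ) * T (Rad ρ)))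
    · filter_upwards [hLtop.eventually_ge_atTop 0] with ρ hL0
      exact mul_nonneg hL0 (hTnn _)
    · filter_upwards [hΛge, hlogRad, Real.tendsto_log_atTop.eventually_ge_atTop (max 0 |b|)]
        with ρ h1 h2 h3
      have hlρ0 : (0:ℝ) ≤ Real.log ρ := le_trans (le_max_left _ _) h3
      have hlρb : |b| ≤ Real.log ρ := le_trans (le_max_right _ _) h3
      have hble : Real.log ρ + b ≤ 2 * Real.log ρ := by
        have := abs_le.1 (le_refl |b|)
        linarith [this.2]
      have hkey : Real.log ρ + b ≤ (8/ε) * Λ ρ := by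
        have h5 : (8/ε) * ((ε/4) * Real.log ρ) = 2 * Real.log ρ := by
          field_simp
          ring
        have h6 := mul_le_mul_of_nonneg_left h1 (by positivity : (0:ℝ) ≤ 8/ε)
        linarith
      rw [h2, ← mul_assoc]
      exact mul_le_mul_of_nonneg_right hkey (hTnn _)
    · have := hcomp.const_mul (8/ε)
      simpa using this
  -- decomposition
  have hsplit : ∀ ρ : ℝ, (∫ x in Metric.closedBall (0 : EuclideanSpace ℝ (Fin 2)) (Rad ρ),
      g ‖x‖) = C - T (Rad ρ) := by
    intro ρ
    have := integral_add_compl (μ := volume)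
      (measurableSet_closedBall (x := (0 : EuclideanSpace ℝ (Fin 2))) (ε := Rad ρ)) hint
    rw [hT]
    simp only
    rw [← hC] at this
    linarith [this]
  set φ : ℝ → ℝ := fun ρ => -b/2 + (Real.log ρ + b) * T (Rad ρ) / (2*C) with hφdef
  have hφ : Tendsto φ atTop (nhds (-b/2)) := by
    have h1 := hmain.div_const (2*C)
    have h2 := tendsto_const_nhds (α := ℝ) (f := atTop) (x := -b/2) |>.add h1
    simpa using h2
  have hexp : Tendsto (fun ρ => Real.exp (φ ρ)) atTop (nhds (Real.exp (-b/2))) :=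
    (Real.continuous_exp.tendsto _).comp hφ
  apply hexp.congr'
  filter_upwards [eventually_gt_atTop (0:ℝ)] with ρ hρ0
  have hI := hsplit ρ
  rw [Real.rpow_def_of_pos hρ0, ← Real.exp_add]
  congr 1
  rw [hI, hφdef]
  simp only
  field_simp
  ring


lemma part2_aux (C b ε : ℝ) (hCpos : 0 < C) (hε : 0 < ε) (hε4 : ε < 1 / 4) :
    Tendsto (fun ρ : ℝ => 4 * ((Real.log ρ + b) / (C * ρ)) ^ ((1:ℝ) - ε) * ρ *
      Real.exp (-(Real.log ρ + b) / 4)) atTop (nhds 0) := by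
  have h1ε : (0:ℝ) < 1 - ε := by linarith
  have hq : (0:ℝ) < 1/4 - ε := by linarith
  set c : ℝ := (1/4 - ε) / (2 * (1 - ε)) with hc
  have hcpos : 0 < c := by positivity
  set d : ℝ := (1/4 - ε) / 2 with hd
  have hdpos : 0 < d := by positivity
  set K' : ℝ := 4 * Real.exp (-b/4) * C ^ (ε - 1 : ℝ) with hK'
  have hK'0 : 0 ≤ K' := by positivity
  have hLtop : Tendsto (fun ρ : ℝ => Real.log ρ + b) atTop atTop :=
    tendsto_atTop_add_const_right _ b Real.tendsto_log_atTop
  have hLrho : Tendsto (fun ρ : ℝ => (Real.log ρ + b) / ρ ^ (c:ℝ)) atTop (nhds 0) := by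
    have h1 : Tendsto (fun ρ : ℝ => Real.log ρ / ρ ^ (c:ℝ)) atTop (nhds 0) :=
      (isLittleO_log_rpow_atTop hcpos).tendsto_div_nhds_zero
    have h2 : Tendsto (fun ρ : ℝ => b / ρ ^ (c:ℝ)) atTop (nhds 0) :=
      Tendsto.div_atTop tendsto_const_nhds (tendsto_rpow_atTop hcpos)
    have := h1.add h2
    simp only [← add_div] at this
    simpa using this
  apply squeeze_zero' (g := fun ρ : ℝ => K' * ρ ^ (-d : ℝ))
  · filter_upwards [eventually_ge_atTop (1:ℝ), hLtop.eventually_ge_atTop 1] with ρ hρ1 hL1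
    have hρ0 : (0:ℝ) < ρ := by linarith
    have hL0 : (0:ℝ) < Real.log ρ + b := by linarith
    have : (0:ℝ) ≤ (Real.log ρ + b) / (C * ρ) := by positivity
    have h4 : (0:ℝ) ≤ ((Real.log ρ + b) / (C * ρ)) ^ ((1:ℝ) - ε) := Real.rpow_nonneg this _
    positivity
  · filter_upwards [eventually_ge_atTop (1:ℝ), hLtop.eventually_ge_atTop 1,
      hLrho.eventually_le_const one_pos] with ρ hρ1 hdiv hle
    have hρ0 : (0:ℝ) < ρ := by linarith
    have hL0 : (0:ℝ) < Real.log ρ + b := by linarith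
    have hρc : (0:ℝ) < ρ ^ (c:ℝ) := Real.rpow_pos_of_pos hρ0 _
    have hLc : Real.log ρ + b ≤ ρ ^ (c:ℝ) := by
      have := (div_le_one hρc).1 hle
      linarith
    have e1 : ((Real.log ρ + b)/(C*ρ)) ^ ((1:ℝ)-ε) =
        (Real.log ρ + b) ^ ((1:ℝ)-ε) / (C*ρ) ^ ((1:ℝ)-ε) :=
      Real.div_rpow hL0.le (by positivity) _
    have e2 : Real.exp (-(Real.log ρ + b)/4) = Real.exp (-b/4) * ρ ^ (-(1/4) : ℝ) := by
      rw [Real.rpow_def_of_pos hρ0, ← Real.exp_add]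
      ring_nf
    have e3 : (Real.log ρ + b) ^ ((1:ℝ)-ε) ≤ ρ ^ (d : ℝ) := by
      calc (Real.log ρ + b) ^ ((1:ℝ)-ε) ≤ (ρ ^ (c:ℝ)) ^ ((1:ℝ)-ε) :=
            Real.rpow_le_rpow hL0.le hLc (by linarith)
        _ = ρ ^ (d:ℝ) := by
            rw [← Real.rpow_mul hρ0.le]
            congr 1
            rw [hc, hd]
            field_simp
    have hpos2 : (0:ℝ) < (C*ρ) ^ ((1:ℝ)-ε) := Real.rpow_pos_of_pos (by positivity) _
    calc 4 * ((Real.log ρ + b)/(C*ρ)) ^ ((1:ℝ)-ε) * ρ * Real.exp (-(Real.log ρ + b)/4)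
        = 4 * Real.exp (-b/4) *
            ((Real.log ρ + b) ^ ((1:ℝ)-ε) * (ρ * ρ ^ (-(1/4):ℝ) / ((C*ρ) ^ ((1:ℝ)-ε)))) := by
          rw [e1, e2]; ring
      _ ≤ 4 * Real.exp (-b/4) *
            (ρ ^ (d:ℝ) * (ρ * ρ ^ (-(1/4):ℝ) / ((C*ρ) ^ ((1:ℝ)-ε)))) := by
          have hfac : (0:ℝ) ≤ ρ * ρ ^ (-(1/4):ℝ) / ((C*ρ) ^ ((1:ℝ)-ε)) := by positivity
          have := mul_le_mul_of_nonneg_right e3 hfac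
          nlinarith [Real.exp_pos (-b/4)]
      _ = K' * ρ ^ (-d:ℝ) := by
          rw [Real.mul_rpow hCpos.le hρ0.le]
          rw [mul_comm ρ (ρ ^ (-(1/4):ℝ)), ← Real.rpow_add_one hρ0.ne']
          have hCne : C ^ ((1:ℝ)-ε) ≠ 0 := (Real.rpow_pos_of_pos hCpos _).ne'
          have hρne : ρ ^ ((1:ℝ)-ε) ≠ 0 := (Real.rpow_pos_of_pos hρ0 _).ne'
          have eA : ρ ^ (-(1/4)+1 : ℝ) / (C ^ ((1:ℝ)-ε) * ρ ^ ((1:ℝ)-ε)) =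
              C ^ (ε-1:ℝ) * ρ ^ ((-(1/4)+1) - (1-ε) : ℝ) := by
            rw [div_mul_eq_div_div_swap, ← Real.rpow_sub hρ0, div_eq_mul_inv,
              ← Real.rpow_neg hCpos.le,
              mul_comm (ρ ^ ((-(1/4)+1) - (1-ε) : ℝ)) (C ^ (-((1:ℝ)-ε))),
              show (-((1:ℝ)-ε)) = ε - 1 by ring]
          have eB : ρ ^ (d:ℝ) * ρ ^ ((-(1/4)+1) - (1-ε) : ℝ) = ρ ^ (-d : ℝ) := by
            rw [← Real.rpow_add hρ0]
            congr 1
            rw [hd]; ring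
          rw [eA, show ρ ^ (d:ℝ) * (C ^ (ε-1:ℝ) * ρ ^ ((-(1/4)+1) - (1-ε) : ℝ)) =
            C ^ (ε-1:ℝ) * (ρ ^ (d:ℝ) * ρ ^ ((-(1/4)+1) - (1-ε) : ℝ)) by ring, eB, hK']
          ring_nf
  · have := (tendsto_rpow_neg_atTop hdpos).const_mul K'
    simpa using this

/-- Let `g` be non-increasing with `g(x) = o(1/(x² log² x))`,
`0 < C = ∫_{ℝ²} g(‖x‖)dx < ∞`, `b` constant, `r_ρ = sqrt((log ρ + b)/(Cρ))`,
and let `ε ∈ (0, 1/4)`.  Then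
`lim_{ρ→∞} ρ^{1/2} exp(−(1/2)·(log ρ + b)/C · ∫_{D(0, r_ρ^{-ε})} g(‖x‖)dx) = e^{−b/2}`,
and `lim_{ρ→∞} 4 ((log ρ + b)/(Cρ))^{1−ε} · ρ · e^{−(log ρ + b)/4} = 0`. -/
theorem stmt_19 (g : ℝ → ℝ) (C b ε : ℝ)
    (hg01 : ∀ x, 0 ≤ x → 0 ≤ g x ∧ g x ≤ 1)
    (hmono : AntitoneOn g (Set.Ici 0))
    (hsmall : Tendsto (fun x : ℝ => g x * x ^ 2 * (Real.log x) ^ 2) atTop (nhds 0))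
    (hint : Integrable (fun x : EuclideanSpace ℝ (Fin 2) => g ‖x‖))
    (hC : C = ∫ x : EuclideanSpace ℝ (Fin 2), g ‖x‖) (hCpos : 0 < C)
    (hε : 0 < ε) (hε4 : ε < 1 / 4) :
    Tendsto
        (fun ρ : ℝ =>
          ρ ^ ((1 : ℝ) / 2) *
            Real.exp
              (-((1 / 2) * ((Real.log ρ + b) / C) *
                  ∫ x in Metric.closedBall (0 : EuclideanSpace ℝ (Fin 2))
                      ((Real.sqrt ((Real.log ρ + b) / (C * ρ))) ^ (-ε : ℝ)),
                    g ‖x‖)))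
        atTop (nhds (Real.exp (-b / 2))) ∧
      Tendsto
        (fun ρ : ℝ =>
          4 * ((Real.log ρ + b) / (C * ρ)) ^ ((1 : ℝ) - ε) * ρ *
            Real.exp (-(Real.log ρ + b) / 4))
        atTop (nhds 0) := by
  exact ⟨stmt_19' g C b ε hg01 hmono hsmall hint hC hCpos hε hε4,
    part2_aux C b ε hCpos hε hε4⟩
end
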